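/- Let q ∈ ℂ, q ≠ 0, and let R = ℂ[t, Q, Q^{−1}] with Qt = qtQ and 𝔥_q = ℂ⟨u, u^{±1}, v⟩ with uv = qvu. The map Φ: R ⊗_ℂ R → R ⊗_ℂ 𝔥_q determined by Φ(a ⊗ b) = (a ⊗ 1)·ρ(b), where ρ(t) = t⊗1 + Q⊗v, ρ(Q) = Q⊗u, is a bijection; i.e., R is an 𝔥_q-Galois extension of ℂ (the coaction makes R a quantum torsor). -/

import Mathlib

/-- Generators of the algebra `R = ℂ⟨t, Q, Q⁻¹⟩`. -/
inductive Rgen | t | Q | Qinv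

open FreeAlgebra in
/-- Defining relations of `R`: `Q·t = q·t·Q` and `Q·Q⁻¹ = Q⁻¹·Q = 1`. -/
inductive Rrel (q : ℂ) : FreeAlgebra ℂ Rgen → FreeAlgebra ℂ Rgen → Prop
  | comm : Rrel q (ι ℂ Rgen.Q * ι ℂ Rgen.t) (q • (ι ℂ Rgen.t * ι ℂ Rgen.Q))
  | inv_right : Rrel q (ι ℂ Rgen.Q * ι ℂ Rgen.Qinv) 1
  | inv_left : Rrel q (ι ℂ Rgen.Qinv * ι ℂ Rgen.Q) 1

/-- The ℂ-algebra `R = ℂ[t, Q, Q⁻¹]` with relation `Qt = qtQ`. -/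
abbrev Ralg (q : ℂ) : Type := RingQuot (Rrel q)

noncomputable def Ralg.t (q : ℂ) : Ralg q :=
  RingQuot.mkAlgHom ℂ (Rrel q) (FreeAlgebra.ι ℂ Rgen.t)
noncomputable def Ralg.Q (q : ℂ) : Ralg q :=
  RingQuot.mkAlgHom ℂ (Rrel q) (FreeAlgebra.ι ℂ Rgen.Q)
noncomputable def Ralg.Qinv (q : ℂ) : Ralg q :=
  RingQuot.mkAlgHom ℂ (Rrel q) (FreeAlgebra.ι ℂ Rgen.Qinv)


/-- Generators of the algebra `𝔥_q = ℂ⟨u, u⁻¹, v⟩`. -/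
inductive Hgen | u | uinv | v

open FreeAlgebra in
/-- Defining relations of `𝔥_q`: `u·v = q·v·u` and `u·u⁻¹ = u⁻¹·u = 1`. -/
inductive Hrel (q : ℂ) : FreeAlgebra ℂ Hgen → FreeAlgebra ℂ Hgen → Prop
  | comm : Hrel q (ι ℂ Hgen.u * ι ℂ Hgen.v) (q • (ι ℂ Hgen.v * ι ℂ Hgen.u))
  | inv_right : Hrel q (ι ℂ Hgen.u * ι ℂ Hgen.uinv) 1
  | inv_left : Hrel q (ι ℂ Hgen.uinv * ι ℂ Hgen.u) 1

/-- The ℂ-algebra `𝔥_q = ℂ⟨u, u⁻¹, v⟩` with relation `uv = qvu`. -/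
abbrev Hq (q : ℂ) : Type := RingQuot (Hrel q)

noncomputable def Hq.u (q : ℂ) : Hq q :=
  RingQuot.mkAlgHom ℂ (Hrel q) (FreeAlgebra.ι ℂ Hgen.u)
noncomputable def Hq.uinv (q : ℂ) : Hq q :=
  RingQuot.mkAlgHom ℂ (Hrel q) (FreeAlgebra.ι ℂ Hgen.uinv)
noncomputable def Hq.v (q : ℂ) : Hq q :=
  RingQuot.mkAlgHom ℂ (Hrel q) (FreeAlgebra.ι ℂ Hgen.v)

open TensorProduct MulOpposite

namespace HGaux
variable (q : ℂ)

lemma Qt : Ralg.Q q * Ralg.t q = q • (Ralg.t q * Ralg.Q q) := by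
  have := RingQuot.mkAlgHom_rel ℂ (Rrel.comm (q := q))
  simpa [map_mul, map_smul, Ralg.Q, Ralg.t] using this

lemma QQinv : Ralg.Q q * Ralg.Qinv q = 1 := by
  have := RingQuot.mkAlgHom_rel ℂ (Rrel.inv_right (q := q))
  simpa [map_mul, Ralg.Q, Ralg.Qinv] using this

lemma QinvQ : Ralg.Qinv q * Ralg.Q q = 1 := by
  have := RingQuot.mkAlgHom_rel ℂ (Rrel.inv_left (q := q))
  simpa [map_mul, Ralg.Q, Ralg.Qinv] using this

lemma tQinv : Ralg.t q * Ralg.Qinv q = q • (Ralg.Qinv q * Ralg.t q) := by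
  have h : Ralg.t q * Ralg.Qinv q
      = Ralg.Qinv q * (Ralg.Q q * Ralg.t q) * Ralg.Qinv q := by
    rw [← mul_assoc, QinvQ, one_mul]
  rw [h, Qt, mul_smul_comm, smul_mul_assoc, mul_assoc, mul_assoc, QQinv, mul_one]

lemma Dmul_sub (x a b : (Ralg q)ᵐᵒᵖ ⊗[ℂ] Ralg q) : x * (a - b) = x * a - x * b :=
  mul_sub x a b
lemma Dsub_mul (a b x : (Ralg q)ᵐᵒᵖ ⊗[ℂ] Ralg q) : (a - b) * x = a * x - b * x :=
  sub_mul a b x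
lemma Dsmul_sub (c : ℂ) (a b : (Ralg q)ᵐᵒᵖ ⊗[ℂ] Ralg q) : c • (a - b) = c • a - c • b :=
  smul_sub c a b
lemma Emul_sub (x a b : Ralg q ⊗[ℂ] Ralg q) : x * (a - b) = x * a - x * b :=
  mul_sub x a b
lemma Esub_mul (a b x : Ralg q ⊗[ℂ] Ralg q) : (a - b) * x = a * x - b * x :=
  sub_mul a b x
lemma Fmul_sub (x a b : Ralg q ⊗[ℂ] Hq q) : x * (a - b) = x * a - x * b :=
  mul_sub x a b
lemma Fsub_mul (a b x : Ralg q ⊗[ℂ] Hq q) : (a - b) * x = a * x - b * x :=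
  sub_mul a b x

noncomputable def gam : Hq q →ₐ[ℂ] ((Ralg q)ᵐᵒᵖ ⊗[ℂ] Ralg q) :=
  RingQuot.liftAlgHom ℂ ⟨FreeAlgebra.lift ℂ (fun g => match g with
    | Hgen.u => op (Ralg.Qinv q) ⊗ₜ Ralg.Q q
    | Hgen.uinv => op (Ralg.Q q) ⊗ₜ Ralg.Qinv q
    | Hgen.v => op (Ralg.Qinv q) ⊗ₜ Ralg.t q - op (Ralg.Qinv q * Ralg.t q) ⊗ₜ 1),
   by
    rintro x y ⟨⟩ <;>
      simp only [map_mul, map_smul, FreeAlgebra.lift_ι_apply, map_one]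
    · simp only [Dmul_sub, Dsub_mul, Dsmul_sub, Algebra.TensorProduct.tmul_mul_tmul,
        ← op_mul, mul_one, one_mul]
      congr 1
      · rw [Qt, tmul_smul]
      · rw [mul_assoc, tQinv, mul_smul_comm, op_smul, smul_tmul']
    · simp [Algebra.TensorProduct.tmul_mul_tmul, ← op_mul, QQinv, QinvQ,
        Algebra.TensorProduct.one_def]
    · simp [Algebra.TensorProduct.tmul_mul_tmul, ← op_mul, QQinv, QinvQ,
        Algebra.TensorProduct.one_def]⟩

@[simp] lemma gam_u : gam q (Hq.u q) = op (Ralg.Qinv q) ⊗ₜ Ralg.Q q := by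
  rw [Hq.u, gam, RingQuot.liftAlgHom_mkAlgHom_apply, FreeAlgebra.lift_ι_apply]
@[simp] lemma gam_uinv : gam q (Hq.uinv q) = op (Ralg.Q q) ⊗ₜ Ralg.Qinv q := by
  rw [Hq.uinv, gam, RingQuot.liftAlgHom_mkAlgHom_apply, FreeAlgebra.lift_ι_apply]
@[simp] lemma gam_v : gam q (Hq.v q) =
    op (Ralg.Qinv q) ⊗ₜ Ralg.t q - op (Ralg.Qinv q * Ralg.t q) ⊗ₜ 1 := by
  rw [Hq.v, gam, RingQuot.liftAlgHom_mkAlgHom_apply, FreeAlgebra.lift_ι_apply]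

noncomputable def U : (Ralg q)ᵐᵒᵖ ⊗[ℂ] Ralg q →ₗ[ℂ] Ralg q ⊗[ℂ] Ralg q :=
  TensorProduct.map (opLinearEquiv ℂ (M := Ralg q)).symm.toLinearMap LinearMap.id

@[simp] lemma U_tmul (x : (Ralg q)ᵐᵒᵖ) (y : Ralg q) : U q (x ⊗ₜ y) = unop x ⊗ₜ y := rfl

@[simp] lemma U_one : U q 1 = 1 := by
  rw [Algebra.TensorProduct.one_def, Algebra.TensorProduct.one_def]
  exact rfl

variable (ρ : Ralg q →ₐ[ℂ] (Ralg q ⊗[ℂ] Hq q))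

noncomputable def Phi : Ralg q ⊗[ℂ] Ralg q →ₗ[ℂ] Ralg q ⊗[ℂ] Hq q :=
  TensorProduct.lift (LinearMap.mk₂ ℂ (fun a b => (a ⊗ₜ (1 : Hq q)) * ρ b)
    (fun a a' b => by simp only [add_tmul, add_mul])
    (fun c a b => by simp only [← smul_tmul', smul_mul_assoc])
    (fun a b b' => by simp only [map_add, mul_add])
    (fun c a b => by simp only [map_smul, mul_smul_comm]))

@[simp] lemma Phi_tmul (a b : Ralg q) : Phi q ρ (a ⊗ₜ b) = (a ⊗ₜ (1 : Hq q)) * ρ b := rfl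

noncomputable def Psi : Ralg q ⊗[ℂ] Hq q →ₗ[ℂ] Ralg q ⊗[ℂ] Ralg q :=
  TensorProduct.lift (LinearMap.mk₂ ℂ (fun a h => (a ⊗ₜ (1 : Ralg q)) * U q (gam q h))
    (fun a a' b => by simp only [add_tmul, add_mul])
    (fun c a b => by simp only [← smul_tmul', smul_mul_assoc])
    (fun a b b' => by simp only [map_add, mul_add])
    (fun c a b => by simp only [map_smul, mul_smul_comm]))

@[simp] lemma Psi_tmul (a : Ralg q) (h : Hq q) :
    Psi q (a ⊗ₜ h) = (a ⊗ₜ (1 : Ralg q)) * U q (gam q h) := rfl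

noncomputable def Tmap : ((Ralg q)ᵐᵒᵖ ⊗[ℂ] Ralg q) →ₗ[ℂ]
    (Ralg q ⊗[ℂ] Ralg q) →ₗ[ℂ] (Ralg q ⊗[ℂ] Ralg q) :=
  TensorProduct.lift (LinearMap.mk₂ ℂ
    (fun x y => LinearMap.mulLeft ℂ ((1 : Ralg q) ⊗ₜ y) ∘ₗ
      LinearMap.mulRight ℂ (unop x ⊗ₜ (1 : Ralg q)))
    (fun x x' y => by
      ext w
      simp [add_tmul, tmul_add, mul_add, add_mul])
    (fun c x y => by
      ext w
      simp [smul_tmul', tmul_smul, mul_smul_comm, smul_mul_assoc])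
    (fun x y y' => by
      ext w
      simp [add_tmul, tmul_add, mul_add, add_mul])
    (fun c x y => by
      ext w
      simp [smul_tmul', tmul_smul, mul_smul_comm, smul_mul_assoc]))

@[simp] lemma Tmap_tmul (x : (Ralg q)ᵐᵒᵖ) (y : Ralg q) (w : Ralg q ⊗[ℂ] Ralg q) :
    Tmap q (x ⊗ₜ y) w = ((1 : Ralg q) ⊗ₜ y) * (w * (unop x ⊗ₜ (1 : Ralg q))) := rfl

-- Φ is left R-linear
lemma Phi_leftmul (a : Ralg q) (W : Ralg q ⊗[ℂ] Ralg q) :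
    Phi q ρ ((a ⊗ₜ (1 : Ralg q)) * W) = (a ⊗ₜ (1 : Hq q)) * Phi q ρ W := by
  induction W using TensorProduct.induction_on with
  | zero => simp
  | tmul b c =>
    simp only [Algebra.TensorProduct.tmul_mul_tmul, one_mul, Phi_tmul, ← mul_assoc]
  | add x y hx hy => simp only [mul_add, map_add, hx, hy]

-- key right-multiplication formula for Φ∘U
lemma PhiU_mul_tmul (X : (Ralg q)ᵐᵒᵖ ⊗[ℂ] Ralg q) (x' y' : Ralg q) :
    Phi q ρ (U q (X * (op x' ⊗ₜ y'))) =
      (x' ⊗ₜ (1 : Hq q)) * Phi q ρ (U q X) * ρ y' := by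
  induction X using TensorProduct.induction_on with
  | zero => simp
  | tmul x y =>
    simp only [Algebra.TensorProduct.tmul_mul_tmul, U_tmul, unop_mul, unop_op, Phi_tmul,
      map_mul, ← mul_assoc, mul_one, one_mul]
  | add x y hx hy => simp only [add_mul, map_add, hx, hy, mul_add]

lemma PhiU_mul (X : (Ralg q)ᵐᵒᵖ ⊗[ℂ] Ralg q) (h : Hq q)
    (hX : Phi q ρ (U q X) = 1 ⊗ₜ h) (Y : (Ralg q)ᵐᵒᵖ ⊗[ℂ] Ralg q) :
    Phi q ρ (U q (X * Y)) = ((1 : Ralg q) ⊗ₜ h) * Phi q ρ (U q Y) := by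
  induction Y using TensorProduct.induction_on with
  | zero => simp
  | tmul x' y' =>
    have e : x' ⊗ₜ[ℂ] y' = (op (unop x')) ⊗ₜ[ℂ] y' := rfl
    rw [e, PhiU_mul_tmul q ρ X, hX, U_tmul, Phi_tmul]
    simp only [unop_op, mul_one, one_mul, ← mul_assoc, Algebra.TensorProduct.tmul_mul_tmul]
  | add x y hx hy => simp only [mul_add, map_add, hx, hy]

lemma PhiUgam (hρt : ρ (Ralg.t q) = Ralg.t q ⊗ₜ 1 + Ralg.Q q ⊗ₜ Hq.v q)
    (hρQ : ρ (Ralg.Q q) = Ralg.Q q ⊗ₜ Hq.u q)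
    (hρQinv : ρ (Ralg.Qinv q) = Ralg.Qinv q ⊗ₜ Hq.uinv q)
    (h : Hq q) : Phi q ρ (U q (gam q h)) = (1 : Ralg q) ⊗ₜ h := by
  obtain ⟨z, rfl⟩ := RingQuot.mkAlgHom_surjective ℂ (Hrel q) h
  refine FreeAlgebra.induction ℂ Hgen
    (motive := fun z => Phi q ρ (U q (gam q (RingQuot.mkAlgHom ℂ (Hrel q) z)))
      = (1 : Ralg q) ⊗ₜ RingQuot.mkAlgHom ℂ (Hrel q) z) ?_ ?_ ?_ ?_ z
  · intro c
    rw [AlgHom.commutes, AlgHom.commutes, Algebra.algebraMap_eq_smul_one, map_smul,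
      map_smul, U_one, Algebra.TensorProduct.one_def, Phi_tmul, map_one, mul_one]
    rw [Algebra.algebraMap_eq_smul_one, tmul_smul]
  · intro g
    match g with
    | Hgen.u =>
      rw [show RingQuot.mkAlgHom ℂ (Hrel q) (FreeAlgebra.ι ℂ Hgen.u) = Hq.u q from rfl,
        gam_u, U_tmul, unop_op, Phi_tmul, hρQ, Algebra.TensorProduct.tmul_mul_tmul,
        QinvQ, one_mul]
    | Hgen.uinv =>
      rw [show RingQuot.mkAlgHom ℂ (Hrel q) (FreeAlgebra.ι ℂ Hgen.uinv) = Hq.uinv q from rfl,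
        gam_uinv, U_tmul, unop_op, Phi_tmul, hρQinv, Algebra.TensorProduct.tmul_mul_tmul,
        QQinv, one_mul]
    | Hgen.v =>
      rw [show RingQuot.mkAlgHom ℂ (Hrel q) (FreeAlgebra.ι ℂ Hgen.v) = Hq.v q from rfl,
        gam_v, map_sub, map_sub, U_tmul, U_tmul, unop_op, unop_op, Phi_tmul, Phi_tmul,
        hρt, map_one, mul_one, mul_add, Algebra.TensorProduct.tmul_mul_tmul,
        Algebra.TensorProduct.tmul_mul_tmul, QinvQ]
      simp
      abel
  · intro a b ha hb
    rw [map_mul, map_mul, PhiU_mul q ρ _ _ ha, hb,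
      Algebra.TensorProduct.tmul_mul_tmul, one_mul]
  · intro a b ha hb
    rw [map_add, map_add, map_add, map_add, ha, hb, tmul_add]

lemma Phi_Psi (hρt : ρ (Ralg.t q) = Ralg.t q ⊗ₜ 1 + Ralg.Q q ⊗ₜ Hq.v q)
    (hρQ : ρ (Ralg.Q q) = Ralg.Q q ⊗ₜ Hq.u q)
    (hρQinv : ρ (Ralg.Qinv q) = Ralg.Qinv q ⊗ₜ Hq.uinv q)
    (z : Ralg q ⊗[ℂ] Hq q) : Phi q ρ (Psi q z) = z := by
  induction z using TensorProduct.induction_on with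
  | zero => simp
  | tmul a h =>
    rw [Psi_tmul, Phi_leftmul, PhiUgam q ρ hρt hρQ hρQinv,
      Algebra.TensorProduct.tmul_mul_tmul, mul_one, one_mul]
  | add x y hx hy => rw [map_add, map_add, hx, hy]

@[simp] lemma Psi_one : Psi q 1 = 1 := by
  rw [Algebra.TensorProduct.one_def, Psi_tmul, map_one, U_one, mul_one,
    ← Algebra.TensorProduct.one_def]

lemma key_N (X Y : (Ralg q)ᵐᵒᵖ ⊗[ℂ] Ralg q) (a c : Ralg q) :
    ((a * c) ⊗ₜ (1 : Ralg q)) * U q (X * Y)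
      = (a ⊗ₜ (1 : Ralg q)) * Tmap q X ((c ⊗ₜ (1 : Ralg q)) * U q Y) := by
  induction X using TensorProduct.induction_on with
  | zero => simp
  | tmul x y =>
    induction Y using TensorProduct.induction_on with
    | zero => simp
    | tmul x' y' =>
      simp only [Algebra.TensorProduct.tmul_mul_tmul, U_tmul, Tmap_tmul, unop_mul,
        one_mul, mul_one, mul_assoc]
    | add y1 y2 h1 h2 =>
      simp only [mul_add, map_add, h1, h2]
  | add x1 x2 h1 h2 =>
    simp only [add_mul, map_add, LinearMap.add_apply, mul_add, h1, h2]

lemma Psi_mul_tmul (a : Ralg q) (h : Hq q) (B : Ralg q ⊗[ℂ] Hq q) :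
    Psi q ((a ⊗ₜ h) * B) = (a ⊗ₜ (1 : Ralg q)) * Tmap q (gam q h) (Psi q B) := by
  induction B using TensorProduct.induction_on with
  | zero => simp
  | tmul c k =>
    rw [Algebra.TensorProduct.tmul_mul_tmul, Psi_tmul, map_mul, key_N, Psi_tmul]
  | add x y hx hy => simp only [mul_add, map_add, hx, hy]

lemma Tmap_one_tmul (X : (Ralg q)ᵐᵒᵖ ⊗[ℂ] Ralg q) (b' : Ralg q) :
    Tmap q X ((1 : Ralg q) ⊗ₜ b') = U q X * ((1 : Ralg q) ⊗ₜ b') := by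
  induction X using TensorProduct.induction_on with
  | zero => simp
  | tmul x y =>
    simp only [Tmap_tmul, U_tmul, Algebra.TensorProduct.tmul_mul_tmul, one_mul, mul_one]
  | add x y hx hy => simp only [map_add, LinearMap.add_apply, add_mul, hx, hy]

lemma Psi_mul (A B : Ralg q ⊗[ℂ] Hq q) (b' : Ralg q) (hB : Psi q B = 1 ⊗ₜ b') :
    Psi q (A * B) = Psi q A * ((1 : Ralg q) ⊗ₜ b') := by
  induction A using TensorProduct.induction_on with
  | zero => simp
  | tmul a h => rw [Psi_mul_tmul, hB, Tmap_one_tmul, Psi_tmul, mul_assoc]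
  | add x y hx hy => simp only [add_mul, map_add, hx, hy]

lemma Psi_rho (hρt : ρ (Ralg.t q) = Ralg.t q ⊗ₜ 1 + Ralg.Q q ⊗ₜ Hq.v q)
    (hρQ : ρ (Ralg.Q q) = Ralg.Q q ⊗ₜ Hq.u q)
    (hρQinv : ρ (Ralg.Qinv q) = Ralg.Qinv q ⊗ₜ Hq.uinv q)
    (b : Ralg q) : Psi q (ρ b) = (1 : Ralg q) ⊗ₜ b := by
  obtain ⟨z, rfl⟩ := RingQuot.mkAlgHom_surjective ℂ (Rrel q) b
  refine FreeAlgebra.induction ℂ Rgen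
    (motive := fun z => Psi q (ρ (RingQuot.mkAlgHom ℂ (Rrel q) z))
      = (1 : Ralg q) ⊗ₜ RingQuot.mkAlgHom ℂ (Rrel q) z) ?_ ?_ ?_ ?_ z
  · intro c
    rw [AlgHom.commutes, AlgHom.commutes, Algebra.algebraMap_eq_smul_one, map_smul,
      Psi_one, Algebra.algebraMap_eq_smul_one, tmul_smul, Algebra.TensorProduct.one_def]
  · intro g
    match g with
    | Rgen.t =>
      rw [show RingQuot.mkAlgHom ℂ (Rrel q) (FreeAlgebra.ι ℂ Rgen.t) = Ralg.t q from rfl,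
        hρt, map_add, Psi_tmul, Psi_tmul, map_one, U_one, mul_one, gam_v, map_sub,
        U_tmul, U_tmul, unop_op, unop_op, Emul_sub q, Algebra.TensorProduct.tmul_mul_tmul,
        Algebra.TensorProduct.tmul_mul_tmul]
      simp only [← mul_assoc, QQinv, one_mul, mul_one]
      abel
    | Rgen.Q =>
      rw [show RingQuot.mkAlgHom ℂ (Rrel q) (FreeAlgebra.ι ℂ Rgen.Q) = Ralg.Q q from rfl,
        hρQ, Psi_tmul, gam_u, U_tmul, unop_op, Algebra.TensorProduct.tmul_mul_tmul,
        QQinv, one_mul]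
    | Rgen.Qinv =>
      rw [show RingQuot.mkAlgHom ℂ (Rrel q) (FreeAlgebra.ι ℂ Rgen.Qinv) = Ralg.Qinv q from rfl,
        hρQinv, Psi_tmul, gam_uinv, U_tmul, unop_op, Algebra.TensorProduct.tmul_mul_tmul,
        QinvQ, one_mul]
  · intro a b ha hb
    rw [map_mul, map_mul, Psi_mul q _ _ _ hb, ha,
      Algebra.TensorProduct.tmul_mul_tmul, one_mul]
  · intro a b ha hb
    rw [map_add, map_add, map_add, ha, hb, tmul_add]

lemma Psi_leftmul (a : Ralg q) (B : Ralg q ⊗[ℂ] Hq q) :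
    Psi q ((a ⊗ₜ (1 : Hq q)) * B) = (a ⊗ₜ (1 : Ralg q)) * Psi q B := by
  induction B using TensorProduct.induction_on with
  | zero => simp
  | tmul c k =>
    simp only [Algebra.TensorProduct.tmul_mul_tmul, one_mul, mul_one, Psi_tmul,
      ← mul_assoc]
  | add x y hx hy => simp only [mul_add, map_add, hx, hy]

lemma Psi_Phi (hρt : ρ (Ralg.t q) = Ralg.t q ⊗ₜ 1 + Ralg.Q q ⊗ₜ Hq.v q)
    (hρQ : ρ (Ralg.Q q) = Ralg.Q q ⊗ₜ Hq.u q)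
    (hρQinv : ρ (Ralg.Qinv q) = Ralg.Qinv q ⊗ₜ Hq.uinv q)
    (z : Ralg q ⊗[ℂ] Ralg q) : Psi q (Phi q ρ z) = z := by
  induction z using TensorProduct.induction_on with
  | zero => simp
  | tmul a b =>
    rw [Phi_tmul, Psi_leftmul, Psi_rho q ρ hρt hρQ hρQinv,
      Algebra.TensorProduct.tmul_mul_tmul, mul_one, one_mul]
  | add x y hx hy => rw [map_add, map_add, hx, hy]

end HGaux

open TensorProduct in
/-- `R/ℂ` is an `𝔥_q`-Galois extension (quantum torsor): the canonical map
`Φ : R ⊗ R → R ⊗ 𝔥_q`, `Φ(a⊗b) = (a⊗1)·ρ(b)`, is bijective, where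
`ρ(t) = t⊗1 + Q⊗v`, `ρ(Q) = Q⊗u`, `ρ(Q⁻¹) = Q⁻¹⊗u⁻¹`. -/
theorem Ralg_hopf_galois (q : ℂ) (hq0 : q ≠ 0)
    (ρ : Ralg q →ₐ[ℂ] (Ralg q ⊗[ℂ] Hq q))
    (hρt : ρ (Ralg.t q) = Ralg.t q ⊗ₜ 1 + Ralg.Q q ⊗ₜ Hq.v q)
    (hρQ : ρ (Ralg.Q q) = Ralg.Q q ⊗ₜ Hq.u q)
    (hρQinv : ρ (Ralg.Qinv q) = Ralg.Qinv q ⊗ₜ Hq.uinv q) :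
    ∃! Φ : Ralg q ⊗[ℂ] Ralg q →ₗ[ℂ] Ralg q ⊗[ℂ] Hq q,
      (∀ a b : Ralg q, Φ (a ⊗ₜ b) = (a ⊗ₜ (1 : Hq q)) * ρ b) ∧
      Function.Bijective Φ := by
  refine ⟨HGaux.Phi q ρ, ⟨fun a b => HGaux.Phi_tmul q ρ a b, ?_, ?_⟩, ?_⟩
  · intro x y hxy
    have h2 := congrArg (HGaux.Psi q) hxy
    rwa [HGaux.Psi_Phi q ρ hρt hρQ hρQinv, HGaux.Psi_Phi q ρ hρt hρQ hρQinv] at h2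
  · intro z
    exact ⟨HGaux.Psi q z, HGaux.Phi_Psi q ρ hρt hρQ hρQinv z⟩
  · rintro Φ' ⟨h1, -⟩
    exact TensorProduct.ext' fun a b => by rw [h1, HGaux.Phi_tmul]
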